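/- Let A be the 4×4 centrosymmetric tridiagonal matrix with diagonal (a,-a,-a,a) (a real), superdiagonal (b₁,b₂,b₃), subdiagonal (b₃,b₂,b₁), J = diag(1,-1,-1,1), and Q = (√2/2)[[I₂,E₂],[-E₂,I₂]]. Then Q^# A Q = JQ*JAQ is the block diagonal matrix [[a,b₁,0,0],[b₃,-b₂-a,0,0],[0,0,b₂-a,b₃],[0,0,b₁,a]]. -/
import Mathlib


open Matrix Real Complex

set_option maxHeartbeats 1000000 in
theorem stmt12 (a : ℝ) (b₁ b₂ b₃ : ℂ)
    (A : Matrix (Fin 4) (Fin 4) ℂ)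
    (hA : A = !![(a : ℂ), b₁, 0, 0;
                 b₃, -(a : ℂ), b₂, 0;
                 0, b₂, -(a : ℂ), b₃;
                 0, 0, b₁, (a : ℂ)])
    (J : Matrix (Fin 4) (Fin 4) ℂ)
    (hJ : J = Matrix.diagonal ![1, -1, -1, 1])
    (Q : Matrix (Fin 4) (Fin 4) ℂ)
    (hQ : Q = ((Real.sqrt 2 / 2 : ℝ) : ℂ) •
      !![1, 0, 0, 1;
         0, 1, 1, 0;
         0, -1, 1, 0;
         -1, 0, 0, 1]) :
    J * Qᴴ * J * A * Q
      = !![(a : ℂ), b₁, 0, 0;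
           b₃, -b₂ - (a : ℂ), 0, 0;
           0, 0, b₂ - (a : ℂ), b₃;
           0, 0, b₁, (a : ℂ)] := by
  have h2 : ((Real.sqrt 2 / 2 : ℝ) : ℂ) * ((Real.sqrt 2 / 2 : ℝ) : ℂ) = 1/2 := by
    rw [← Complex.ofReal_mul, div_mul_div_comm, Real.mul_self_sqrt (by norm_num)]
    norm_num
  have hJ' : J = !![(1:ℂ),0,0,0; 0,-1,0,0; 0,0,-1,0; 0,0,0,1] := by
    subst hJ; ext i j; fin_cases i <;> fin_cases j <;> simp [Matrix.diagonal, Matrix.vecHead, Matrix.vecTail]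
  subst hA hQ
  rw [hJ']
  simp only [conjTranspose_smul, Matrix.mul_smul, Matrix.smul_mul, smul_smul,
    star_def, Complex.conj_ofReal, h2]
  ext i j
  fin_cases i <;> fin_cases j <;>
    · simp [Matrix.mul_apply, Matrix.vecMul, dotProduct, Fin.sum_univ_four,
        Matrix.vecHead, Matrix.vecTail, Complex.conj_ofReal]
      try ring
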